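/- arXiv:1712.00485 — 3 statements merged into one kernel-verified Lean document; each statement's English description precedes it below -/
import Mathlib

section
/- Let m be a positive integer, let r be a real number with 0 < r < m, and let γ, δ, c_s > 0. Define γ_max(c_s) = δ^{r/m} c_s^{(m−r)/m} / s(r,m) where s(r,m) = (r/m)·(m/r − 1)^{(m−r)/m}. If 0 < γ < γ_max(c_s), then for every real ξ the Fourier symbol c_s + δ|ξ|^{2m} − γ|ξ|^{2r} of the operator c_s + 𝓛 is strictly positive; in particular the operator c_s + 𝓛 used in the Petviashvili iteration is invertible. -/
/-- For `0 < r < m`, `δ, c_s > 0` and `0 < γ < γ_max(c_s)`, the Fourier symbol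
`c_s + δ|ξ|^{2m} − γ|ξ|^{2r}` of the operator `c_s + 𝓛` is strictly positive for all `ξ`. -/
theorem stmt_2 (m : ℕ) (hm : 0 < m) (r γ δ c_s : ℝ) (hr : 0 < r) (hrm : r < m)
    (hγ : 0 < γ) (hδ : 0 < δ) (hc : 0 < c_s)
    (hγmax : γ < δ ^ (r / (m : ℝ)) * c_s ^ (((m : ℝ) - r) / (m : ℝ)) /
      ((r / (m : ℝ)) * ((m : ℝ) / r - 1) ^ (((m : ℝ) - r) / (m : ℝ)))) :
    ∀ ξ : ℝ, 0 < c_s + δ * |ξ| ^ (2 * (m : ℝ)) - γ * |ξ| ^ (2 * r) := by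
  intro ξ
  have hmR : (0:ℝ) < (m:ℝ) := by exact_mod_cast hm
  set w₁ : ℝ := r / m with hw₁def
  set w₂ : ℝ := ((m:ℝ) - r) / m with hw₂def
  have hw₁ : 0 < w₁ := by positivity
  have hw₂ : 0 < w₂ := div_pos (by linarith) hmR
  have hsum : w₁ + w₂ = 1 := by
    rw [hw₁def, hw₂def, ← add_div, add_sub_cancel, div_self hmR.ne']
  -- rewrite s(r,m) as w₁^w₁ * w₂^w₂
  have hq : (m:ℝ) / r - 1 = w₂ / w₁ := by
    rw [hw₂def, hw₁def]
    field_simp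
  have hs : w₁ * ((m:ℝ) / r - 1) ^ w₂ = w₁ ^ w₁ * w₂ ^ w₂ := by
    rw [hq, Real.div_rpow hw₂.le hw₁.le]
    calc w₁ * (w₂ ^ w₂ / w₁ ^ w₂) = (w₁ ^ (1:ℝ) / w₁ ^ w₂) * w₂ ^ w₂ := by
          rw [Real.rpow_one]; ring
      _ = w₁ ^ ((1:ℝ) - w₂) * w₂ ^ w₂ := by rw [Real.rpow_sub hw₁]
      _ = w₁ ^ w₁ * w₂ ^ w₂ := by rw [show (1:ℝ) - w₂ = w₁ by linarith]
  set y : ℝ := |ξ| with hydef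
  have hy : 0 ≤ y := abs_nonneg ξ
  -- AM-GM
  have key : δ ^ w₁ * c_s ^ w₂ / (w₁ ^ w₁ * w₂ ^ w₂) * y ^ (2 * r)
      ≤ c_s + δ * y ^ (2 * (m:ℝ)) := by
    have hp₁ : (0:ℝ) ≤ δ * y ^ (2 * (m:ℝ)) / w₁ := by positivity
    have hp₂ : (0:ℝ) ≤ c_s / w₂ := by positivity
    have H := Real.geom_mean_le_arith_mean2_weighted hw₁.le hw₂.le hp₁ hp₂ hsum
    have hpow : (y ^ (2 * (m:ℝ))) ^ w₁ = y ^ (2 * r) := by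
      rw [← Real.rpow_mul hy]
      congr 1
      rw [hw₁def]
      field_simp
    have hL : (δ * y ^ (2 * (m:ℝ)) / w₁) ^ w₁ * (c_s / w₂) ^ w₂
        = δ ^ w₁ * c_s ^ w₂ / (w₁ ^ w₁ * w₂ ^ w₂) * y ^ (2 * r) := by
      rw [Real.div_rpow (by positivity) hw₁.le, Real.div_rpow hc.le hw₂.le,
        Real.mul_rpow hδ.le (by positivity), hpow]
      field_simp
    have hR : w₁ * (δ * y ^ (2 * (m:ℝ)) / w₁) + w₂ * (c_s / w₂)
        = δ * y ^ (2 * (m:ℝ)) + c_s := by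
      field_simp
    rw [hL, hR] at H
    linarith
  rw [hs] at hγmax
  rcases eq_or_lt_of_le hy with h0 | h0
  · have : y = 0 := h0.symm
    rw [this, Real.zero_rpow (by positivity : 2 * r ≠ 0),
      Real.zero_rpow (by positivity : 2 * (m:ℝ) ≠ 0)]
    simpa using hc
  · have hyr : 0 < y ^ (2 * r) := Real.rpow_pos_of_pos h0 _
    have : γ * y ^ (2 * r) < δ ^ w₁ * c_s ^ w₂ / (w₁ ^ w₁ * w₂ ^ w₂) * y ^ (2 * r) :=
      mul_lt_mul_of_pos_right hγmax hyr
    linarith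
end

section
/- Let m be a positive integer, let r be a real number with 0 < r < m, and let γ, δ, c_s > 0 with γ < γ_max(c_s) = δ^{r/m} c_s^{(m−r)/m} / s(r,m), where s(r,m) = (r/m)·(m/r − 1)^{(m−r)/m}. Define the linear dispersion relation ω(k) = −c_s k − k(δ|k|^{2m} − γ|k|^{2r}) for k ∈ ℝ. Then the phase speed v(k) = ω(k)/k satisfies v(k) < 0 for every k ≠ 0; i.e., every plane-wave component of small-amplitude solutions travels to the left relative to a reference frame moving with a solitary wave of speed c_s. -/
/-- For `0 < r < m`, `γ, δ, c_s > 0` with `γ < γ_max(c_s)`, the phase speed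
`v(k) = ω(k)/k` of the linearized generalized Benjamin equation in the frame moving with
the solitary wave, where `ω(k) = −c_s k − k(δ|k|^{2m} − γ|k|^{2r})`, is negative for all
`k ≠ 0`. -/
theorem stmt_3 (m : ℕ) (hm : 0 < m) (r γ δ c_s : ℝ) (hr : 0 < r) (hrm : r < m)
    (hγ : 0 < γ) (hδ : 0 < δ) (hc : 0 < c_s)
    (hγmax : γ < δ ^ (r / (m : ℝ)) * c_s ^ (((m : ℝ) - r) / (m : ℝ)) /
      ((r / (m : ℝ)) * ((m : ℝ) / r - 1) ^ (((m : ℝ) - r) / (m : ℝ)))) :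
    ∀ k : ℝ, k ≠ 0 →
      (-c_s * k - k * (δ * |k| ^ (2 * (m : ℝ)) - γ * |k| ^ (2 * r))) / k < 0 := by
  intro k hk
  set M : ℝ := (m : ℝ) with hM
  have hMpos : (0:ℝ) < M := Nat.cast_pos.mpr hm
  set w₁ : ℝ := r / M with hw₁def
  set w₂ : ℝ := (M - r) / M with hw₂def
  have hw₁ : 0 < w₁ := div_pos hr hMpos
  have hw₂ : 0 < w₂ := div_pos (by linarith) hMpos
  have hwsum : w₁ + w₂ = 1 := by
    rw [hw₁def, hw₂def, ← add_div]
    field_simp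
    ring
  -- rewrite the denominator of γ_max
  have hDen : w₁ * (M / r - 1) ^ w₂ = w₁ ^ w₁ * w₂ ^ w₂ := by
    have h1 : M / r - 1 = w₂ / w₁ := by
      rw [hw₁def, hw₂def]
      field_simp
    have h2 : w₁ ^ w₁ * w₁ ^ w₂ = w₁ := by
      rw [← Real.rpow_add hw₁, hwsum, Real.rpow_one]
    have hpw : (0:ℝ) < w₁ ^ w₂ := Real.rpow_pos_of_pos hw₁ _
    rw [h1, Real.div_rpow hw₂.le hw₁.le, mul_div_assoc', div_eq_iff hpw.ne']
    linear_combination (-(w₂ ^ w₂)) * h2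
  have hγC : γ < δ ^ w₁ * c_s ^ w₂ / (w₁ ^ w₁ * w₂ ^ w₂) := by
    rw [← hDen]; exact hγmax
  set t : ℝ := |k| ^ (2:ℕ) with ht
  have htpos : 0 < t := by positivity
  have ht2 : t = |k| ^ ((2:ℕ):ℝ) := (Real.rpow_natCast |k| 2).symm
  -- power rewrites
  have hpm : |k| ^ (2 * M) = t ^ M := by
    rw [ht2, ← Real.rpow_mul (abs_nonneg k)]
    norm_num
  have hpr : |k| ^ (2 * r) = t ^ r := by
    rw [ht2, ← Real.rpow_mul (abs_nonneg k)]
    norm_num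
  -- AM-GM
  have hamgm := Real.geom_mean_le_arith_mean2_weighted hw₁.le hw₂.le
      (p₁ := δ * t ^ M / w₁) (p₂ := c_s / w₂) (by positivity) (by positivity) hwsum
  have hrhs : w₁ * (δ * t ^ M / w₁) + w₂ * (c_s / w₂) = δ * t ^ M + c_s := by
    field_simp
  have htMr : (t ^ M) ^ w₁ = t ^ r := by
    rw [← Real.rpow_mul htpos.le]
    congr 1
    rw [hw₁def]
    field_simp
  have hlhs : (δ * t ^ M / w₁) ^ w₁ * (c_s / w₂) ^ w₂
      = δ ^ w₁ * c_s ^ w₂ / (w₁ ^ w₁ * w₂ ^ w₂) * t ^ r := by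
    rw [Real.div_rpow (by positivity) hw₁.le, Real.div_rpow hc.le hw₂.le,
      Real.mul_rpow hδ.le (by positivity), htMr]
    field_simp
  rw [hrhs, hlhs] at hamgm
  have hkey : γ * t ^ r < c_s + δ * t ^ M := by
    have h1 : γ * t ^ r < δ ^ w₁ * c_s ^ w₂ / (w₁ ^ w₁ * w₂ ^ w₂) * t ^ r :=
      mul_lt_mul_of_pos_right hγC (by positivity)
    linarith
  rw [hpm, hpr]
  have hA : (-c_s * k - k * (δ * t ^ M - γ * t ^ r)) / k
      = -(c_s + (δ * t ^ M - γ * t ^ r)) := by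
    field_simp
    ring
  rw [hA]
  linarith
end

section
/- Let m be a positive integer, let r be a real number with 0 < r < m, and let δ, c_s > 0. Define ψ(x) = (2r+1)γ x^r − (2m+1)δ x^m for x > 0 and γ* = ( c_s / ( (2r+1)(1 − r/m) (r(2r+1)/(m(2m+1)δ))^{r/(m−r)} ) )^{(m−r)/m}. Then for γ > 0 the strict inequality ψ(x) < c_s holds for every x > 0 if and only if γ < γ*; moreover, when γ = γ* the maximum value of ψ over (0,∞) equals exactly c_s. -/
open Real

lemma psi_eq_max (r e a b : ℝ) (hr : 0 < r) (he : 0 < e) (ha : 0 < a) (hb : 0 < b) :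
    a * ((a * r / (b * (r + e))) ^ e⁻¹) ^ r - b * ((a * r / (b * (r + e))) ^ e⁻¹) ^ (r + e)
      = (e / (r + e)) * a ^ ((r + e) / e) * (r / ((r + e) * b)) ^ (r / e) := by
  have hre : 0 < r + e := by linarith
  set s : ℝ := r / ((r + e) * b) with hs
  have hs0 : 0 < s := by positivity
  have ht : a * r / (b * (r + e)) = a * s := by rw [hs]; field_simp
  have hta : 0 < a * s := by positivity
  have h1 : ((a * s) ^ e⁻¹) ^ r = (a * s) ^ (r / e) := by
    rw [← Real.rpow_mul hta.le]; congr 1; field_simp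
  have h2 : ((a * s) ^ e⁻¹) ^ (r + e) = (a * s) ^ (r / e) * (a * s) := by
    rw [← Real.rpow_mul hta.le,
      show e⁻¹ * (r + e) = r / e + 1 by field_simp,
      Real.rpow_add hta, Real.rpow_one]
  have h3 : (a * s) ^ (r / e) = a ^ (r / e) * s ^ (r / e) :=
    Real.mul_rpow ha.le hs0.le
  have h4 : a ^ ((r + e) / e) = a * a ^ (r / e) := by
    rw [show (r + e) / e = 1 + r / e by field_simp; ring, Real.rpow_add ha,
      Real.rpow_one]
  have hbs : a - b * (a * s) = a * e / (r + e) := by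
    rw [hs]; field_simp; ring
  rw [ht, h1, h2, h3, h4]
  calc a * (a ^ (r/e) * s ^ (r/e)) - b * (a ^ (r/e) * s ^ (r/e) * (a * s))
      = (a ^ (r/e) * s ^ (r/e)) * (a - b * (a * s)) := by ring
    _ = (a ^ (r/e) * s ^ (r/e)) * (a * e / (r + e)) := by rw [hbs]
    _ = e / (r + e) * (a * a ^ (r/e)) * s ^ (r/e) := by ring

lemma psi_le_max (r e a b x : ℝ) (hr : 0 < r) (he : 0 < e) (ha : 0 < a) (hb : 0 < b)
    (hx : 0 < x) :
    a * x ^ r - b * x ^ (r + e)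
      ≤ (e / (r + e)) * a ^ ((r + e) / e) * (r / ((r + e) * b)) ^ (r / e) := by
  have hre : 0 < r + e := by linarith
  set p : ℝ := (r + e) / r with hp
  set q : ℝ := (r + e) / e with hq
  have hp1 : 1 < p := by rw [hp, lt_div_iff₀ hr]; linarith
  have hp0 : 0 < p := lt_trans one_pos hp1
  have hq0 : 0 < q := by positivity
  have hpq : p.HolderConjugate q := by
    refine Real.holderConjugate_iff.mpr ⟨hp1, ?_⟩
    rw [hp, hq]
    field_simp
  have hpb : 0 < p * b := by positivity
  set c : ℝ := (p * b) ^ p⁻¹ with hc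
  have hc0 : 0 < c := rpow_pos_of_pos hpb _
  have young := Real.young_inequality_of_nonneg
    (mul_nonneg hc0.le (rpow_nonneg hx.le r)) (div_nonneg ha.le hc0.le) hpq
  have huv : c * x ^ r * (a / c) = a * x ^ r := by field_simp
  have hup : (c * x ^ r) ^ p = (p * b) * x ^ (r + e) := by
    rw [Real.mul_rpow hc0.le (rpow_nonneg hx.le r), hc,
      ← Real.rpow_mul hpb.le, inv_mul_cancel₀ hp0.ne', Real.rpow_one,
      ← Real.rpow_mul hx.le, show r * p = r + e by rw [hp]; field_simp]
  have hvq : (a / c) ^ q = a ^ q * (r / ((r + e) * b)) ^ (r / e) := by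
    rw [Real.div_rpow ha.le hc0.le, hc, ← Real.rpow_mul hpb.le,
      show p⁻¹ * q = r / e by rw [hp, hq]; field_simp,
      div_eq_mul_inv, ← Real.rpow_neg hpb.le,
      show -(r / e) = (-1) * (r / e) by ring,
      Real.rpow_mul hpb.le, Real.rpow_neg_one,
      show (p * b)⁻¹ = r / ((r + e) * b) by rw [hp]; field_simp,]
  rw [huv, hup, hvq] at young
  have h1 : p * b * x ^ (r + e) / p = b * x ^ (r + e) := by
    field_simp
  have h2 : a ^ q * (r / ((r + e) * b)) ^ (r / e) / q
      = (e / (r + e)) * a ^ ((r + e) / e) * (r / ((r + e) * b)) ^ (r / e) := by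
    rw [hq]; field_simp
  rw [h1, h2] at young
  linarith

/-- For `0 < r < m`, `δ, c_s > 0`, with `ψ(x) = (2r+1)γ x^r − (2m+1)δ x^m` and
`γ* = (c_s / ((2r+1)(1 − r/m)(r(2r+1)/(m(2m+1)δ))^{r/(m−r)}))^{(m−r)/m}`:
for `γ > 0` one has `ψ(x) < c_s` for all `x > 0` iff `γ < γ*`, and when `γ = γ*` the
maximum of `ψ` over `(0,∞)` equals exactly `c_s`. -/
theorem stmt_6 (m : ℕ) (hm : 0 < m) (r δ c_s : ℝ) (hr : 0 < r) (hrm : r < m)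
    (hδ : 0 < δ) (hc : 0 < c_s) :
    let γstar : ℝ := (c_s / ((2 * r + 1) * (1 - r / m) *
      (r * (2 * r + 1) / ((m : ℝ) * (2 * (m : ℝ) + 1) * δ)) ^ (r / ((m : ℝ) - r)))) ^
        (((m : ℝ) - r) / (m : ℝ))
    (∀ γ : ℝ, 0 < γ →
      ((∀ x : ℝ, 0 < x →
          (2 * r + 1) * γ * x ^ r - (2 * (m : ℝ) + 1) * δ * x ^ (m : ℝ) < c_s) ↔
        γ < γstar)) ∧
    (∀ x : ℝ, 0 < x →
      (2 * r + 1) * γstar * x ^ r - (2 * (m : ℝ) + 1) * δ * x ^ (m : ℝ) ≤ c_s) ∧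
    (∃ x : ℝ, 0 < x ∧
      (2 * r + 1) * γstar * x ^ r - (2 * (m : ℝ) + 1) * δ * x ^ (m : ℝ) = c_s) := by
  intro γstar
  have hm0 : (0 : ℝ) < (m : ℝ) := by exact_mod_cast hm
  set e : ℝ := (m : ℝ) - r with he_def
  have he : 0 < e := by rw [he_def]; linarith
  have hre : r + e = (m : ℝ) := by rw [he_def]; ring
  have hA : (0 : ℝ) < 2 * r + 1 := by linarith
  have hb : (0 : ℝ) < (2 * (m : ℝ) + 1) * δ := by positivity
  set K : ℝ := (2 * r + 1) * (1 - r / (m : ℝ)) *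
      (r * (2 * r + 1) / ((m : ℝ) * (2 * (m : ℝ) + 1) * δ)) ^ (r / e) with hK_def
  have h1mr : 1 - r / (m : ℝ) = e / (m : ℝ) := by rw [he_def]; field_simp
  have hK : 0 < K := by
    rw [hK_def, h1mr]
    have : (0:ℝ) < (r * (2 * r + 1) / ((m : ℝ) * (2 * (m : ℝ) + 1) * δ)) ^ (r / e) :=
      rpow_pos_of_pos (by positivity) _
    positivity
  have hγs : γstar = (c_s / K) ^ (e / (m : ℝ)) := rfl
  have hγspos : 0 < γstar := by
    rw [hγs]; exact rpow_pos_of_pos (div_pos hc hK) _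
  -- K * γstar ^ (m/e) = c_s
  have hMs : K * γstar ^ ((m : ℝ) / e) = c_s := by
    rw [hγs, ← Real.rpow_mul (div_pos hc hK).le,
      show e / (m : ℝ) * ((m : ℝ) / e) = 1 by field_simp, Real.rpow_one]
    field_simp
  -- bridge: the generic max value equals K * γ ^ (m/e)
  have hbridge : ∀ γ : ℝ, 0 < γ →
      (e / (r + e)) * ((2 * r + 1) * γ) ^ ((r + e) / e) *
        (r / ((r + e) * ((2 * (m : ℝ) + 1) * δ))) ^ (r / e) = K * γ ^ ((m : ℝ) / e) := by
    intro γ hγ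
    rw [hre]
    have hsplit : ((2 * r + 1) * γ) ^ ((m : ℝ) / e)
        = (2 * r + 1) ^ ((m : ℝ) / e) * γ ^ ((m : ℝ) / e) :=
      Real.mul_rpow hA.le hγ.le
    have hAe : (2 * r + 1) ^ ((m : ℝ) / e) = (2 * r + 1) * (2 * r + 1) ^ (r / e) := by
      rw [show (m : ℝ) / e = 1 + r / e by rw [div_eq_iff he.ne', add_mul, div_mul_cancel₀ _ he.ne']; linarith,
        Real.rpow_add hA, Real.rpow_one]
    have hbase : r * (2 * r + 1) / ((m : ℝ) * (2 * (m : ℝ) + 1) * δ)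
        = (2 * r + 1) * (r / ((m : ℝ) * ((2 * (m : ℝ) + 1) * δ))) := by
      field_simp
    have hKsplit : K = (2 * r + 1) * (e / (m : ℝ)) *
        ((2 * r + 1) ^ (r / e) * (r / ((m : ℝ) * ((2 * (m : ℝ) + 1) * δ))) ^ (r / e)) := by
      rw [hK_def, h1mr, hbase, Real.mul_rpow hA.le (by positivity)]
    rw [hsplit, hAe, hKsplit]
    ring
  -- upper bound
  have hub : ∀ γ : ℝ, 0 < γ → ∀ x : ℝ, 0 < x →
      (2 * r + 1) * γ * x ^ r - (2 * (m : ℝ) + 1) * δ * x ^ (m : ℝ)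
        ≤ K * γ ^ ((m : ℝ) / e) := by
    intro γ hγ x hx
    have h := psi_le_max r e ((2 * r + 1) * γ) ((2 * (m : ℝ) + 1) * δ) x hr he
      (by positivity) hb hx
    rw [hbridge γ hγ] at h
    rw [hre] at h
    calc (2 * r + 1) * γ * x ^ r - (2 * (m : ℝ) + 1) * δ * x ^ (m : ℝ)
        = (2 * r + 1) * γ * x ^ r - (2 * (m : ℝ) + 1) * δ * x ^ (m : ℝ) := rfl
      _ ≤ K * γ ^ ((m : ℝ) / e) := h
  -- attained
  have hat : ∀ γ : ℝ, 0 < γ → ∃ x : ℝ, 0 < x ∧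
      (2 * r + 1) * γ * x ^ r - (2 * (m : ℝ) + 1) * δ * x ^ (m : ℝ)
        = K * γ ^ ((m : ℝ) / e) := by
    intro γ hγ
    refine ⟨((2 * r + 1) * γ * r / ((2 * (m : ℝ) + 1) * δ * (m : ℝ))) ^ e⁻¹,
      rpow_pos_of_pos (by positivity) _, ?_⟩
    have h := psi_eq_max r e ((2 * r + 1) * γ) ((2 * (m : ℝ) + 1) * δ) hr he
      (by positivity) hb
    rw [hbridge γ hγ] at h
    rw [hre] at h
    exact h
  -- strict monotonicity iff
  have hmono : ∀ γ : ℝ, 0 < γ → (K * γ ^ ((m : ℝ) / e) < c_s ↔ γ < γstar) := by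
    intro γ hγ
    rw [← hMs, mul_lt_mul_iff_right₀ hK]
    exact Real.rpow_lt_rpow_iff hγ.le hγspos.le (by positivity)
  refine ⟨?_, ?_, ?_⟩
  · intro γ hγ
    constructor
    · intro h
      obtain ⟨x0, hx0, hx0eq⟩ := hat γ hγ
      have := h x0 hx0
      rw [hx0eq] at this
      exact (hmono γ hγ).mp this
    · intro hγlt x hx
      exact lt_of_le_of_lt (hub γ hγ x hx) ((hmono γ hγ).mpr hγlt)
  · intro x hx
    calc (2 * r + 1) * γstar * x ^ r - (2 * (m : ℝ) + 1) * δ * x ^ (m : ℝ)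
        ≤ K * γstar ^ ((m : ℝ) / e) := hub γstar hγspos x hx
      _ = c_s := hMs
  · obtain ⟨x0, hx0, hx0eq⟩ := hat γstar hγspos
    exact ⟨x0, hx0, by rw [hx0eq, hMs]⟩
end
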